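/- arXiv:2603.26678 — 3 statements merged into one kernel-verified Lean document; each statement's English description precedes it below -/
import Mathlib

section
/- Let G(y) = θ·((y/k)^{λ/(α+1)} − 1) − c_f·k·(y/k − 1) with θ>0, c_f>0, k>0, λ>1+α>0, and suppose θ > (α+1)·c_f·k/λ. Then there exists a unique y₂ ∈ (0,k) such that G(y₂)=0, and G(y)<0 for y∈(y₂,k) while G(y)>0 for y∈(0,y₂). -/
open Set Filter Topology

/-- Auxiliary: facts about f t = θ (t^p − 1) − C (t − 1) on [0,1]. -/
lemma aux_stmt8 (θ C p : ℝ) (hθ : 0 < θ) (hC : 0 < C) (hp : 1 < p)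
    (h1 : C < θ * p) (h2 : θ < C) :
    ∃ a ∈ Set.Ioo (0:ℝ) 1,
      (θ * (a ^ p - 1) - C * (a - 1) = 0) ∧
      (∀ t ∈ Set.Ioo (0:ℝ) a, 0 < θ * (t ^ p - 1) - C * (t - 1)) ∧
      (∀ t ∈ Set.Ioo a 1, θ * (t ^ p - 1) - C * (t - 1) < 0) := by
  set f : ℝ → ℝ := fun t => θ * (t ^ p - 1) - C * (t - 1) with hf
  have hp0 : (0:ℝ) < p := lt_trans one_pos hp
  -- strict convexity
  have hconv : StrictConvexOn ℝ (Set.Ici (0:ℝ)) f := by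
    refine ⟨convex_Ici 0, ?_⟩
    intro x hx y hy hxy a b ha hb hab
    have h := (strictConvexOn_rpow hp).2 hx hy hxy ha hb hab
    simp only [smul_eq_mul] at h ⊢
    have := mul_lt_mul_of_pos_left h hθ
    simp only [hf]
    nlinarith [this]
  have hf1 : f 1 = 0 := by simp [hf]
  have hf0 : 0 < f 0 := by
    simp [hf, Real.zero_rpow (ne_of_gt hp0)]
    linarith
  -- derivative at 1
  have hD : HasDerivAt f (θ * p - C) 1 := by
    have h1' : HasDerivAt (fun t : ℝ => t ^ p) (p * (1:ℝ) ^ (p - 1)) 1 :=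
      Real.hasDerivAt_rpow_const (Or.inl one_ne_zero)
    rw [Real.one_rpow] at h1'
    have h2' : HasDerivAt (fun t : ℝ => θ * (t ^ p - 1)) (θ * (p * 1)) 1 :=
      ((h1'.sub_const 1).const_mul θ)
    have h3' : HasDerivAt (fun t : ℝ => C * (t - 1)) (C * 1) 1 :=
      ((hasDerivAt_id 1).sub_const 1).const_mul C
    have := h2'.sub h3'
    simp only [mul_one] at this
    exact this
  have hd : 0 < θ * p - C := by linarith
  -- find t₀ ∈ (0,1) with f t₀ < 0
  obtain ⟨t₀, ht₀, hft₀⟩ : ∃ t₀ ∈ Set.Ioo (0:ℝ) 1, f t₀ < 0 := by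
    have hslope := hasDerivAt_iff_tendsto_slope.1 hD
    have hev : ∀ᶠ t in 𝓝[≠] (1:ℝ), 0 < slope f 1 t :=
      hslope.eventually (eventually_gt_nhds hd)
    have hle : 𝓝[Set.Ioo (0:ℝ) 1] (1:ℝ) ≤ 𝓝[≠] (1:ℝ) :=
      nhdsWithin_mono _ (fun x hx => ne_of_lt hx.2)
    have hnb : (𝓝[Set.Ioo (0:ℝ) 1] (1:ℝ)).NeBot := right_nhdsWithin_Ioo_neBot one_pos
    obtain ⟨t, htmem, hts⟩ := (eventually_mem_nhdsWithin.and (hev.filter_mono hle)).exists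
    refine ⟨t, htmem, ?_⟩
    have ht1 : t - 1 < 0 := by linarith [htmem.2]
    have : slope f 1 t = f t / (t - 1) := by
      rw [slope_def_field, hf1, sub_zero]
    rw [this] at hts
    by_contra hge
    push_neg at hge
    have : f t / (t - 1) ≤ 0 := div_nonpos_of_nonneg_of_nonpos hge (le_of_lt ht1)
    linarith
  -- continuity
  have hcont : ContinuousOn f (Set.Icc (0:ℝ) t₀) := by
    apply Continuous.continuousOn
    have : Continuous (fun t : ℝ => t ^ p) := Real.continuous_rpow_const (le_of_lt hp0)
    continuity
  -- IVT
  obtain ⟨a, ha, hfa⟩ : ∃ a ∈ Set.Ioo (0:ℝ) t₀, f a = 0 := by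
    have h0 : (0:ℝ) ∈ Set.Ioo (f t₀) (f 0) := ⟨hft₀, hf0⟩
    have := intermediate_value_Ioo' (le_of_lt ht₀.1) hcont h0
    obtain ⟨a, ha, hfa⟩ := this
    exact ⟨a, ha, hfa⟩
  have ha01 : a ∈ Set.Ioo (0:ℝ) 1 := ⟨ha.1, lt_trans ha.2 ht₀.2⟩
  refine ⟨a, ha01, hfa, ?_, ?_⟩
  · -- positivity on (0,a)
    intro t ht
    by_contra hle
    push_neg at hle
    have hta : t < a := ht.2
    have hmem : a ∈ openSegment ℝ t 1 := by
      rw [openSegment_eq_Ioo (lt_trans hta ha01.2)]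
      exact ⟨hta, ha01.2⟩
    have := hconv.lt_on_openSegment (le_of_lt ht.1) (Set.mem_Ici.2 zero_le_one)
      (ne_of_lt (lt_trans hta ha01.2)) hmem
    rw [hfa, hf1] at this
    have : (0:ℝ) < max (f t) 0 := this
    rcases max_cases (f t) 0 with ⟨heq, _⟩ | ⟨heq, _⟩ <;> rw [heq] at this
    · have h' : 0 < θ * (t ^ p - 1) - C * (t - 1) := this
      linarith
    · linarith
  · -- negativity on (a,1)
    intro t ht
    have hmem : t ∈ openSegment ℝ a 1 := by
      rw [openSegment_eq_Ioo ha01.2]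
      exact ht
    have := hconv.lt_on_openSegment (le_of_lt ha01.1) (Set.mem_Ici.2 zero_le_one) (ne_of_lt ha01.2) hmem
    rw [hfa, hf1, max_self] at this
    exact this

/-- With θ > (α+1)c_fk/λ and θ < c_fk, G has a unique zero y₂∈(0,k),
with G>0 on (0,y₂) and G<0 on (y₂,k). -/
theorem stmt_8 (θ k α lam cf : ℝ) (hθ : 0 < θ) (hk : 0 < k) (hcf : 0 < cf)
    (hα : 0 < 1 + α) (hlam : 1 + α < lam)
    (hθ1 : (α + 1) * cf * k / lam < θ) (hθ2 : θ < cf * k) :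
    let G : ℝ → ℝ := fun y => θ * ((y / k) ^ (lam / (α + 1)) - 1) - cf * k * (y / k - 1)
    ∃ y₂ ∈ Set.Ioo (0:ℝ) k,
      G y₂ = 0 ∧
      (∀ y ∈ Set.Ioo (0:ℝ) y₂, 0 < G y) ∧
      (∀ y ∈ Set.Ioo y₂ k, G y < 0) ∧
      (∀ y ∈ Set.Ioo (0:ℝ) k, G y = 0 → y = y₂) := by
  intro G
  have hα' : (0:ℝ) < α + 1 := by linarith
  have hlam0 : (0:ℝ) < lam := by linarith
  have hp : 1 < lam / (α + 1) := (one_lt_div hα').2 (by linarith)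
  have hC : 0 < cf * k := mul_pos hcf hk
  have h1 : cf * k < θ * (lam / (α + 1)) := by
    rw [div_lt_iff₀ hlam0] at hθ1
    rw [mul_div_assoc', lt_div_iff₀ hα']
    nlinarith
  obtain ⟨a, ha, hfa, hpos, hneg⟩ := aux_stmt8 θ (cf * k) (lam / (α + 1)) hθ hC hp h1 hθ2
  refine ⟨k * a, ⟨mul_pos hk ha.1, by nlinarith [ha.2]⟩, ?_, ?_, ?_, ?_⟩
  · have : k * a / k = a := by field_simp
    simpa [G, this] using hfa
  · intro y hy
    have hyk : y / k ∈ Set.Ioo (0:ℝ) a :=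
      ⟨div_pos hy.1 hk, (div_lt_iff₀ hk).2 (by linarith [hy.2])⟩
    exact hpos _ hyk
  · intro y hy
    have hyk : y / k ∈ Set.Ioo a 1 :=
      ⟨(lt_div_iff₀ hk).2 (by linarith [hy.1]), (div_lt_one hk).2 hy.2⟩
    exact hneg _ hyk
  · intro y hy hGy
    by_contra hne
    rcases lt_or_gt_of_ne hne with h | h
    · have hyk : y / k ∈ Set.Ioo (0:ℝ) a :=
        ⟨div_pos hy.1 hk, (div_lt_iff₀ hk).2 (by linarith)⟩
      have := hpos _ hyk
      simp only [G] at hGy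
      linarith
    · have hyk : y / k ∈ Set.Ioo a 1 :=
        ⟨(lt_div_iff₀ hk).2 (by linarith), (div_lt_one hk).2 hy.2⟩
      have := hneg _ hyk
      simp only [G] at hGy
      linarith
end

section
/- In the resource-led case (0<λ≤1, λ<1+α), for any y∈[0,k], the maximizer over x∈[0,1] of the piecewise profit Π(x,y) is: min{f(c_f),1} if y < k·f(c_f)^{1+α}; (y/k)^{1/(1+α)} if k·f(c_f)^{1+α} ≤ y < k·f(c_r)^{1+α}; and min{f(c_r),1} if y ≥ k·f(c_r)^{1+α}, where f(c)=(θλ/((α+1)ck))^{1/(1+α−λ)}. -/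
open Real Set

private lemma st10_cont (θ k c p q : ℝ) (hp : 0 ≤ p) (hq : 0 ≤ q) :
    Continuous (fun x : ℝ => θ * x ^ p - c * k * x ^ q) := by
  apply Continuous.sub
  · exact continuous_const.mul (continuous_iff_continuousAt.2 fun x =>
      Real.continuousAt_rpow_const x p (Or.inr hp))
  · exact continuous_const.mul (continuous_iff_continuousAt.2 fun x =>
      Real.continuousAt_rpow_const x q (Or.inr hq))

private lemma st10_deriv (θ k c lam α : ℝ) {x : ℝ} (hx : 0 < x) :
    HasDerivAt (fun x : ℝ => θ * x ^ lam - c * k * x ^ (1 + α))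
      (θ * (lam * x ^ (lam - 1)) - c * k * ((1 + α) * x ^ (1 + α - 1))) x := by
  exact ((Real.hasDerivAt_rpow_const (Or.inl hx.ne')).const_mul θ).sub
    ((Real.hasDerivAt_rpow_const (Or.inl hx.ne')).const_mul (c * k))

private lemma st10_Me (θ k α lam c : ℝ) (hθ : 0 < θ) (hk : 0 < k) (hα : 0 ≤ α)
    (hlam0 : 0 < lam) (hlam : lam < 1 + α) (hc : 0 < c) :
    ((θ * lam / ((α + 1) * c * k)) ^ (1 / (1 + α - lam))) ^ (1 + α - lam)
      = θ * lam / ((α + 1) * c * k) := by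
  have hA : (0:ℝ) ≤ θ * lam / ((α + 1) * c * k) := by positivity
  have he : (1 + α - lam) ≠ 0 := by linarith [hlam]
  rw [← Real.rpow_mul hA, one_div, inv_mul_cancel₀ he, Real.rpow_one]

private lemma st10_mono (θ k α lam c : ℝ) (hθ : 0 < θ) (hk : 0 < k) (hα : 0 ≤ α)
    (hlam0 : 0 < lam) (hlam : lam < 1 + α) (hc : 0 < c) :
    MonotoneOn (fun x : ℝ => θ * x ^ lam - c * k * x ^ (1 + α))
      (Set.Icc 0 ((θ * lam / ((α + 1) * c * k)) ^ (1 / (1 + α - lam)))) := by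
  have he : (0:ℝ) < 1 + α - lam := by linarith
  set A := θ * lam / ((α + 1) * c * k) with hAdef
  have hA : 0 < A := by positivity
  set M := A ^ (1 / (1 + α - lam)) with hM
  apply monotoneOn_of_deriv_nonneg (convex_Icc _ _)
  · exact (st10_cont θ k c lam (1 + α) hlam0.le (by linarith)).continuousOn
  · rw [interior_Icc]
    exact fun x hx => (st10_deriv θ k c lam α hx.1).differentiableAt.differentiableWithinAt
  · rw [interior_Icc]
    intro x hx
    rw [(st10_deriv θ k c lam α hx.1).deriv]
    have hx0 : 0 < x := hx.1
    have hxe : x ^ (1 + α - lam) ≤ A := by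
      calc x ^ (1 + α - lam) ≤ M ^ (1 + α - lam) :=
            Real.rpow_le_rpow hx0.le hx.2.le he.le
        _ = A := st10_Me θ k α lam c hθ hk hα hlam0 hlam hc
    have hdenom : (0:ℝ) < (α + 1) * c * k := by positivity
    have h1 : x ^ (1 + α - lam) * ((α + 1) * c * k) ≤ θ * lam := by
      have := (div_le_div_iff_of_pos_right hdenom).2 hxe
      calc x ^ (1 + α - lam) * ((α + 1) * c * k) ≤ A * ((α + 1) * c * k) :=
            mul_le_mul_of_nonneg_right hxe hdenom.le
        _ = θ * lam := by rw [hAdef]; field_simp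
    have hpw : 0 < x ^ (lam - 1) := Real.rpow_pos_of_pos hx0 _
    have hxx : x ^ (1 + α - lam) * x ^ (lam - 1) = x ^ (1 + α - 1) := by
      rw [← Real.rpow_add hx0]; ring_nf
    have h2 : c * k * ((1 + α) * x ^ (1 + α - 1)) ≤ θ * (lam * x ^ (lam - 1)) := by
      calc c * k * ((1 + α) * x ^ (1 + α - 1))
          = (x ^ (1 + α - lam) * ((α + 1) * c * k)) * x ^ (lam - 1) := by
            rw [← hxx]; ring
        _ ≤ (θ * lam) * x ^ (lam - 1) := mul_le_mul_of_nonneg_right h1 hpw.le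
        _ = θ * (lam * x ^ (lam - 1)) := by ring
    linarith

private lemma st10_anti (θ k α lam c : ℝ) (hθ : 0 < θ) (hk : 0 < k) (hα : 0 ≤ α)
    (hlam0 : 0 < lam) (hlam : lam < 1 + α) (hc : 0 < c) :
    AntitoneOn (fun x : ℝ => θ * x ^ lam - c * k * x ^ (1 + α))
      (Set.Ici ((θ * lam / ((α + 1) * c * k)) ^ (1 / (1 + α - lam)))) := by
  have he : (0:ℝ) < 1 + α - lam := by linarith
  set A := θ * lam / ((α + 1) * c * k) with hAdef
  have hA : 0 < A := by positivity
  set M := A ^ (1 / (1 + α - lam)) with hM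
  have hMpos : 0 < M := Real.rpow_pos_of_pos hA _
  apply antitoneOn_of_deriv_nonpos (convex_Ici _)
  · exact (st10_cont θ k c lam (1 + α) hlam0.le (by linarith)).continuousOn
  · rw [interior_Ici]
    exact fun x hx =>
      (st10_deriv θ k c lam α (hMpos.trans hx)).differentiableAt.differentiableWithinAt
  · rw [interior_Ici]
    intro x hx
    have hx0 : 0 < x := hMpos.trans hx
    rw [(st10_deriv θ k c lam α hx0).deriv]
    have hxe : A ≤ x ^ (1 + α - lam) := by
      calc A = M ^ (1 + α - lam) := (st10_Me θ k α lam c hθ hk hα hlam0 hlam hc).symm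
        _ ≤ x ^ (1 + α - lam) := Real.rpow_le_rpow hMpos.le hx.le he.le
    have hdenom : (0:ℝ) < (α + 1) * c * k := by positivity
    have h1 : θ * lam ≤ x ^ (1 + α - lam) * ((α + 1) * c * k) := by
      calc θ * lam = A * ((α + 1) * c * k) := by rw [hAdef]; field_simp
        _ ≤ x ^ (1 + α - lam) * ((α + 1) * c * k) :=
            mul_le_mul_of_nonneg_right hxe hdenom.le
    have hpw : 0 < x ^ (lam - 1) := Real.rpow_pos_of_pos hx0 _
    have hxx : x ^ (1 + α - lam) * x ^ (lam - 1) = x ^ (1 + α - 1) := by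
      rw [← Real.rpow_add hx0]; ring_nf
    have h2 : θ * (lam * x ^ (lam - 1)) ≤ c * k * ((1 + α) * x ^ (1 + α - 1)) := by
      calc θ * (lam * x ^ (lam - 1)) = (θ * lam) * x ^ (lam - 1) := by ring
        _ ≤ (x ^ (1 + α - lam) * ((α + 1) * c * k)) * x ^ (lam - 1) :=
            mul_le_mul_of_nonneg_right h1 hpw.le
        _ = c * k * ((1 + α) * x ^ (1 + α - 1)) := by rw [← hxx]; ring
    linarith

/-- Lemma 2, resource-led case 0<λ≤1<1+α: best response to any y∈[0,k]. -/
theorem stmt_10 (θ k α lam cr cf : ℝ) (hθ : 0 < θ) (hk : 0 < k)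
    (hα : 0 ≤ α) (hlam0 : 0 < lam) (hlam1 : lam ≤ 1) (hlam : lam < 1 + α)
    (hcr : 0 < cr) (hcc : cr < cf) :
    let β : ℝ → ℝ → ℝ := fun x y => min (y / (k * x ^ (1 + α))) 1
    let Prof : ℝ → ℝ → ℝ := fun x y =>
      θ * x ^ lam - (β x y * cr + (1 - β x y) * cf) * k * x ^ (1 + α)
    let f : ℝ → ℝ := fun c => (θ * lam / ((α + 1) * c * k)) ^ (1 / (1 + α - lam))
    ∀ y ∈ Set.Icc (0:ℝ) k,
      (y < k * f cf ^ (1 + α) →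
        ∀ x ∈ Set.Icc (0:ℝ) 1, Prof x y ≤ Prof (min (f cf) 1) y) ∧
      (k * f cf ^ (1 + α) ≤ y → y < k * f cr ^ (1 + α) →
        ∀ x ∈ Set.Icc (0:ℝ) 1, Prof x y ≤ Prof ((y / k) ^ (1 / (1 + α))) y) ∧
      (k * f cr ^ (1 + α) ≤ y →
        ∀ x ∈ Set.Icc (0:ℝ) 1, Prof x y ≤ Prof (min (f cr) 1) y) := by
  intro β Prof f y hy
  have hcf : 0 < cf := hcr.trans hcc
  have hy0 : 0 ≤ y := hy.1
  have hyk : y ≤ k := hy.2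
  have hq : (0:ℝ) < 1 + α := by linarith
  -- the two pure profit functions
  set πr : ℝ → ℝ := fun x => θ * x ^ lam - cr * k * x ^ (1 + α) with hπr
  set πf : ℝ → ℝ := fun x => θ * x ^ lam - cf * k * x ^ (1 + α) with hπf
  -- the threshold
  set xy : ℝ := (y / k) ^ (1 / (1 + α)) with hxy
  have hxy0 : 0 ≤ xy := Real.rpow_nonneg (by positivity) _
  have hxy1 : xy ≤ 1 := by
    have := Real.rpow_le_one (x := y / k) (by positivity)
      (by rw [div_le_one hk]; exact hyk) (by positivity : (0:ℝ) ≤ 1 / (1 + α))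
    simpa [hxy] using this
  have hkxy : k * xy ^ (1 + α) = y := by
    have : xy ^ (1 + α) = y / k := by
      rw [hxy, ← Real.rpow_mul (by positivity), one_div, inv_mul_cancel₀ hq.ne',
        Real.rpow_one]
    rw [this]; field_simp
  -- comparison: for x ≥ 0, k x^(1+α) ≤ y ↔ x ≤ xy
  have hcmp : ∀ x : ℝ, 0 ≤ x → (k * x ^ (1 + α) ≤ y ↔ x ≤ xy) := by
    intro x hx
    rw [hxy, one_div, le_rpow_inv_iff_of_pos hx (by positivity) hq,
      le_div_iff₀ hk]
    constructor <;> intro h <;> linarith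
  -- Prof in the two regimes
  have hProf_le : ∀ x : ℝ, 0 ≤ x → k * x ^ (1 + α) ≤ y → Prof x y = πr x := by
    intro x hx hle
    rcases eq_or_lt_of_le hx with h0 | h0
    · simp [Prof, β, πr, ← h0, Real.zero_rpow hq.ne', Real.zero_rpow hlam0.ne']
    · have hK : 0 < k * x ^ (1 + α) := by positivity
      have hβ : min (y / (k * x ^ (1 + α))) 1 = 1 :=
        min_eq_right ((one_le_div hK).2 hle)
      show θ * x ^ lam - (min (y / (k * x ^ (1 + α))) 1 * cr
          + (1 - min (y / (k * x ^ (1 + α))) 1) * cf) * k * x ^ (1 + α) = πr x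
      rw [hβ, hπr]; ring_nf
  have hProf_gt : ∀ x : ℝ, 0 ≤ x → y < k * x ^ (1 + α) →
      Prof x y = πf x + (cf - cr) * y := by
    intro x hx hgt
    have hK : 0 < k * x ^ (1 + α) := hy0.trans_lt hgt
    have hβ : min (y / (k * x ^ (1 + α))) 1 = y / (k * x ^ (1 + α)) :=
      min_eq_left ((div_le_one hK).2 hgt.le)
    show θ * x ^ lam - (min (y / (k * x ^ (1 + α))) 1 * cr
        + (1 - min (y / (k * x ^ (1 + α))) 1) * cf) * k * x ^ (1 + α)
        = πf x + (cf - cr) * y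
    rw [hβ]
    have hKne : k * x ^ (1 + α) ≠ 0 := hK.ne'
    have hxne : x ^ (1 + α) ≠ 0 := right_ne_zero_of_mul hKne
    rw [hπf]
    field_simp
    ring
  -- boundary equality
  have hbd : πf xy + (cf - cr) * y = πr xy := by
    show θ * xy ^ lam - cf * k * xy ^ (1 + α) + (cf - cr) * y
      = θ * xy ^ lam - cr * k * xy ^ (1 + α)
    linear_combination (cr - cf) * hkxy
  -- monotonicity facts
  have hfr := st10_mono θ k α lam cr hθ hk hα hlam0 hlam hcr
  have hff := st10_mono θ k α lam cf hθ hk hα hlam0 hlam hcf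
  have har := st10_anti θ k α lam cr hθ hk hα hlam0 hlam hcr
  have haf := st10_anti θ k α lam cf hθ hk hα hlam0 hlam hcf
  have hfcr_pos : 0 < f cr := Real.rpow_pos_of_pos (by positivity) _
  have hfcf_pos : 0 < f cf := Real.rpow_pos_of_pos (by positivity) _
  have hffr : f cf ≤ f cr := by
    have he : (0:ℝ) ≤ 1 / (1 + α - lam) := by
      have h' : (0:ℝ) < 1 + α - lam := by linarith
      positivity
    refine Real.rpow_le_rpow (by positivity) ?_ he
    exact div_le_div_of_nonneg_left (by positivity) (by positivity)
      (mul_le_mul_of_nonneg_right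
        (mul_le_mul_of_nonneg_left hcc.le (by linarith)) hk.le)
  -- universal: on [0,1], πc x ≤ πc (min (f c) 1)
  have hopt : ∀ c : ℝ, 0 < c → ∀ x ∈ Set.Icc (0:ℝ) 1,
      (fun x => θ * x ^ lam - c * k * x ^ (1 + α)) x
        ≤ (fun x => θ * x ^ lam - c * k * x ^ (1 + α)) (min (f c) 1) := by
    intro c hc x hx
    have hfc_pos : 0 < f c := Real.rpow_pos_of_pos (by positivity) _
    rcases le_or_gt x (f c) with h | h
    · have hxm : x ≤ min (f c) 1 := le_min h hx.2
      exact st10_mono θ k α lam c hθ hk hα hlam0 hlam hc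
        ⟨hx.1, hxm.trans (min_le_left _ _)⟩
        ⟨le_trans (le_min hfc_pos.le zero_le_one) (le_refl _), min_le_left _ _⟩ hxm
    · have hm : min (f c) 1 = f c := min_eq_left (h.le.trans hx.2)
      rw [hm]
      exact st10_anti θ k α lam c hθ hk hα hlam0 hlam hc (Set.mem_Ici.2 le_rfl)
        (Set.mem_Ici.2 h.le) h.le
  refine ⟨?_, ?_, ?_⟩
  · -- Case 1: y < k f(cf)^(1+α), i.e. xy < f cf
    intro hcase x hx
    have hxyf : xy < f cf := by
      by_contra h
      push_neg at h
      exact absurd ((hcmp (f cf) hfcf_pos.le).2 h) (not_le.2 hcase)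
    set m : ℝ := min (f cf) 1 with hm
    have hm0 : 0 ≤ m := le_min hfcf_pos.le zero_le_one
    rcases le_or_gt m xy with hmxy | hmxy
    · -- then m = 1 ≤ xy
      have hm1 : m = 1 := by
        rcases min_cases (f cf) 1 with ⟨h1, h2⟩ | ⟨h1, h2⟩
        · exfalso; rw [hm, h1] at hmxy; exact absurd hmxy (not_le.2 hxyf)
        · rw [hm, h1]
      have h1xy : (1:ℝ) ≤ xy := by rw [hm1] at hmxy; exact hmxy
      have hx_le : x ≤ xy := hx.2.trans h1xy
      rw [hProf_le x hx.1 ((hcmp x hx.1).2 hx_le),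
        hProf_le m hm0 ((hcmp m hm0).2 hmxy), hm1]
      have hxfr : xy < f cr := lt_of_lt_of_le hxyf hffr
      exact hfr ⟨hx.1, (hx.2.trans h1xy).trans hxfr.le⟩
        ⟨zero_le_one, h1xy.trans hxfr.le⟩ hx.2
    · -- xy < m
      have hProfm : Prof m y = πf m + (cf - cr) * y := by
        apply hProf_gt m hm0
        by_contra h
        push_neg at h
        exact absurd ((hcmp m hm0).1 h) (not_le.2 hmxy)
      rw [hProfm]
      have hmfcf : m ≤ f cf := min_le_left _ _
      rcases le_or_gt x xy with hxle | hxgt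
      · rw [hProf_le x hx.1 ((hcmp x hx.1).2 hxle)]
        have h1 : πr x ≤ πr xy :=
          hfr ⟨hx.1, hxle.trans ((hxyf.trans_le hffr).le)⟩
            ⟨hxy0, (hxyf.trans_le hffr).le⟩ hxle
        have h2 : πr xy = πf xy + (cf - cr) * y := hbd.symm
        have h3 : πf xy ≤ πf m :=
          hff ⟨hxy0, hxyf.le⟩ ⟨hm0, hmfcf⟩ hmxy.le
        linarith
      · rw [hProf_gt x hx.1 (by
          by_contra h
          push_neg at h
          exact absurd ((hcmp x hx.1).1 h) (not_le.2 hxgt))]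
        have h3 : πf x ≤ πf m := hopt cf hcf x hx
        linarith
  · -- Case 2: k f(cf)^(1+α) ≤ y < k f(cr)^(1+α), i.e. f cf ≤ xy < f cr
    intro hc1 hc2 x hx
    have hfcf_xy : f cf ≤ xy := (hcmp (f cf) hfcf_pos.le).1 hc1
    have hxy_fcr : xy < f cr := by
      by_contra h
      push_neg at h
      exact absurd ((hcmp (f cr) hfcr_pos.le).2 h) (not_le.2 hc2)
    have hProfxy : Prof xy y = πr xy := hProf_le xy hxy0 (le_of_eq hkxy)
    rw [hProfxy]
    rcases le_or_gt x xy with hxle | hxgt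
    · rw [hProf_le x hx.1 ((hcmp x hx.1).2 hxle)]
      exact hfr ⟨hx.1, hxle.trans hxy_fcr.le⟩ ⟨hxy0, hxy_fcr.le⟩ hxle
    · rw [hProf_gt x hx.1 (by
        by_contra h
        push_neg at h
        exact absurd ((hcmp x hx.1).1 h) (not_le.2 hxgt))]
      have h1 : πf x ≤ πf xy := haf (Set.mem_Ici.2 hfcf_xy)
        (Set.mem_Ici.2 (hfcf_xy.trans hxgt.le)) hxgt.le
      linarith [hbd]
  · -- Case 3: y ≥ k f(cr)^(1+α), i.e. f cr ≤ xy
    intro hcase x hx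
    have hfcr_xy : f cr ≤ xy := (hcmp (f cr) hfcr_pos.le).1 hcase
    set m : ℝ := min (f cr) 1 with hm
    have hm0 : 0 ≤ m := le_min hfcr_pos.le zero_le_one
    have hmxy : m ≤ xy := le_trans (min_le_left _ _) hfcr_xy
    have hProfm : Prof m y = πr m := hProf_le m hm0 ((hcmp m hm0).2 hmxy)
    rw [hProfm]
    rcases le_or_gt x xy with hxle | hxgt
    · rw [hProf_le x hx.1 ((hcmp x hx.1).2 hxle)]
      exact hopt cr hcr x hx
    · rw [hProf_gt x hx.1 (by
        by_contra h
        push_neg at h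
        exact absurd ((hcmp x hx.1).1 h) (not_le.2 hxgt))]
      have h1 : πf x ≤ πf xy := haf (Set.mem_Ici.2 ((hffr.trans hfcr_xy)))
        (Set.mem_Ici.2 ((hffr.trans hfcr_xy).trans hxgt.le)) hxgt.le
      have h2 : πr xy ≤ πr m := hopt cr hcr xy ⟨hxy0, hxy1⟩
      linarith [hbd]
end

section
/- In the duopoly pricing subgame with capabilities x₁ > x₂ > 0 and uniform willingness-to-pay on [0, θ̃], the unique Nash equilibrium prices are p₁* = 2θ̃·x₁^λ(x₁^λ − x₂^λ)/(4x₁^λ − x₂^λ) and p₂* = θ̃·x₂^λ(x₁^λ − x₂^λ)/(4x₁^λ − x₂^λ); i.e., these prices simultaneously satisfy the first-order conditions ∂Π₁/∂p₁ = 0 and ∂Π₂/∂p₂ = 0, where Π₁ = p₁(θ̃ − (p₁−p₂)/(x₁^λ−x₂^λ))/θ̃ − C₁ and Π₂ = p₂((p₁−p₂)/(x₁^λ−x₂^λ) − p₂x₂^{−λ})/θ̃ − C₂, with C₁, C₂ constants. -/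
lemma deriv1 (θt d q C t : ℝ) :
    deriv (fun p : ℝ => p * (θt - (p - q) / d) / θt - C) t
      = (1 * (θt - (t - q) / d) + t * (-(1 / d))) / θt := by
  have h1 : HasDerivAt (fun p : ℝ => p) 1 t := hasDerivAt_id t
  have h2 : HasDerivAt (fun p : ℝ => θt - (p - q) / d) (-(1 / d)) t := by
    have := ((h1.sub_const q).div_const d).const_sub θt
    simpa using this
  exact (((h1.mul h2).div_const θt).sub_const C).deriv

lemma deriv2 (θt d e q C t : ℝ) :
    deriv (fun p : ℝ => p * ((q - p) / d - p * e) / θt - C) t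
      = (1 * ((q - t) / d - t * e) + t * (-(1 / d) - e)) / θt := by
  have h1 : HasDerivAt (fun p : ℝ => p) 1 t := hasDerivAt_id t
  have h2 : HasDerivAt (fun p : ℝ => (q - p) / d - p * e) (-(1 / d) - e) t := by
    have := (((h1.const_sub q).div_const d).sub (h1.mul_const e))
    simpa [neg_div, Pi.sub_def] using this
  exact (((h1.mul h2).div_const θt).sub_const C).deriv

/-- In the duopoly pricing subgame, the prices
p₁* = 2θ̃x₁^λ(x₁^λ−x₂^λ)/(4x₁^λ−x₂^λ), p₂* = θ̃x₂^λ(x₁^λ−x₂^λ)/(4x₁^λ−x₂^λ)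
are the unique simultaneous solution of the first-order conditions. -/
theorem stmt_14 (θt x₁ x₂ lam C₁ C₂ : ℝ) (hθ : 0 < θt) (hlam : 0 < lam)
    (hx₂ : 0 < x₂) (hx : x₂ < x₁) (hx₁ : x₁ ≤ 1) :
    let Prof₁ : ℝ → ℝ → ℝ := fun p₁ p₂ =>
      p₁ * (θt - (p₁ - p₂) / (x₁ ^ lam - x₂ ^ lam)) / θt - C₁
    let Prof₂ : ℝ → ℝ → ℝ := fun p₁ p₂ =>
      p₂ * ((p₁ - p₂) / (x₁ ^ lam - x₂ ^ lam) - p₂ * x₂ ^ (-lam)) / θt - C₂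
    let p₁s : ℝ := 2 * θt * x₁ ^ lam * (x₁ ^ lam - x₂ ^ lam) / (4 * x₁ ^ lam - x₂ ^ lam)
    let p₂s : ℝ := θt * x₂ ^ lam * (x₁ ^ lam - x₂ ^ lam) / (4 * x₁ ^ lam - x₂ ^ lam)
    (deriv (fun p₁ => Prof₁ p₁ p₂s) p₁s = 0 ∧ deriv (fun p₂ => Prof₂ p₁s p₂) p₂s = 0) ∧
    (∀ q₁ q₂ : ℝ,
      deriv (fun p₁ => Prof₁ p₁ q₂) q₁ = 0 → deriv (fun p₂ => Prof₂ q₁ p₂) q₂ = 0 →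
      q₁ = p₁s ∧ q₂ = p₂s) := by
  intro Prof₁ Prof₂ p₁s p₂s
  have ha : (0:ℝ) < x₁ ^ lam := Real.rpow_pos_of_pos (hx₂.trans hx) lam
  have hb : (0:ℝ) < x₂ ^ lam := Real.rpow_pos_of_pos hx₂ lam
  have hba : x₂ ^ lam < x₁ ^ lam := Real.rpow_lt_rpow hx₂.le hx hlam
  set a := x₁ ^ lam
  set b := x₂ ^ lam
  have he : x₂ ^ (-lam) = b⁻¹ := by
    rw [Real.rpow_neg hx₂.le]
  have hd : (0:ℝ) < a - b := sub_pos.mpr hba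
  have hd' : a - b ≠ 0 := ne_of_gt hd
  have h4 : (0:ℝ) < 4 * a - b := by linarith
  have h4' : 4 * a - b ≠ 0 := ne_of_gt h4
  have hθ' : θt ≠ 0 := ne_of_gt hθ
  have hb' : b ≠ 0 := ne_of_gt hb
  constructor
  · constructor
    · rw [show (fun p₁ => Prof₁ p₁ p₂s)
        = fun p : ℝ => p * (θt - (p - p₂s) / (a - b)) / θt - C₁ from rfl,
        deriv1]
      show (1 * (θt - (p₁s - p₂s) / (a - b)) + p₁s * (-(1 / (a - b)))) / θt = 0
      simp only [p₁s, p₂s]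
      rw [show x₁ ^ lam = a from rfl, show x₂ ^ lam = b from rfl]
      have h4'' : a * 4 - b ≠ 0 := by rw [mul_comm]; exact h4'
      field_simp
      ring
    · rw [show (fun p₂ => Prof₂ p₁s p₂)
        = fun p : ℝ => p * ((p₁s - p) / (a - b) - p * b⁻¹) / θt - C₂ from by
          (simp only [Prof₂, he]; rfl), deriv2]
      show (1 * ((p₁s - p₂s) / (a - b) - p₂s * b⁻¹) + p₂s * (-(1 / (a - b)) - b⁻¹)) / θt = 0
      simp only [p₁s, p₂s]
      rw [show x₁ ^ lam = a from rfl, show x₂ ^ lam = b from rfl]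
      field_simp
      ring
  · intro q₁ q₂ h1 h2
    rw [show (fun p₁ => Prof₁ p₁ q₂)
        = fun p : ℝ => p * (θt - (p - q₂) / (a - b)) / θt - C₁ from rfl,
        deriv1] at h1
    rw [show (fun p₂ => Prof₂ q₁ p₂)
        = fun p : ℝ => p * ((q₁ - p) / (a - b) - p * b⁻¹) / θt - C₂ from by
          (simp only [Prof₂, he]; rfl), deriv2] at h2
    have e1 : θt * (a - b) - 2 * q₁ + q₂ = 0 := by
      field_simp at h1
      linarith
    have e2 : q₁ * b - 2 * q₂ * a = 0 := by
      field_simp at h2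
      nlinarith [h2]
    have hq1 : q₁ = p₁s := by
      simp only [p₁s]
      rw [show x₁ ^ lam = a from rfl, show x₂ ^ lam = b from rfl]
      have h4'' : a * 4 - b ≠ 0 := by rw [mul_comm]; exact h4'
      field_simp
      nlinarith [e1, e2]
    have hq2 : q₂ = p₂s := by
      simp only [p₂s]
      rw [show x₁ ^ lam = a from rfl, show x₂ ^ lam = b from rfl]
      have h4'' : a * 4 - b ≠ 0 := by rw [mul_comm]; exact h4'
      field_simp
      nlinarith [e1, e2]
    exact ⟨hq1, hq2⟩
end
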